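/- Fix n ≥ 2, p ≥ 1 and 1 ≤ t ≤ 2np. Let A_t be the set of normalized vertex alignment matrices A = A(π) (with representative π minimizing the number of mismatches with π* = (id,…,id)) such that ‖A^* − A^*A‖₁ ∈ [(t−1)/2, t/2]. Then |A_t| ≤ binom(np, t ∧ np) · n^{t ∧ np}. -/

import Mathlib

open Finset

/-- The normalized vertex alignment matrix `A(π)` of a `p`-tuple of permutations. -/
noncomputable def Amat {n p : ℕ} (π : Fin p → Equiv.Perm (Fin n)) :
    Matrix (Fin p × Fin n) (Fin p × Fin n) ℝ :=
  fun x y => (p : ℝ)⁻¹ * (if π x.1 x.2 = π y.1 y.2 then 1 else 0)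

/-- Entrywise ℓ¹ norm of a matrix. -/
noncomputable def l1Norm {ι κ : Type*} [Fintype ι] [Fintype κ]
    (M : Matrix ι κ ℝ) : ℝ := ∑ i, ∑ j, |M i j|

def cnt {n p : ℕ} (π : Fin p → Equiv.Perm (Fin n)) (w v : Fin n) : ℕ :=
  (univ.filter fun j => π j v = w).card

lemma cnt_le {n p : ℕ} (π : Fin p → Equiv.Perm (Fin n)) (w v : Fin n) : cnt π w v ≤ p := by
  classical
  calc cnt π w v ≤ (univ : Finset (Fin p)).card := Finset.card_filter_le _ _
  _ = p := by simp

lemma sum_cnt_row {n p : ℕ} (π : Fin p → Equiv.Perm (Fin n)) (w : Fin n) :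
    ∑ u, cnt π w u = p := by
  classical
  unfold cnt
  have hc : ∀ u : Fin n, (univ.filter fun j => π j u = w).card
      = ∑ j : Fin p, if π j u = w then (1:ℕ) else 0 := by
    intro u; rw [Finset.card_filter]
  simp only [hc]
  rw [Finset.sum_comm]
  have : ∀ j : Fin p, (∑ u : Fin n, if π j u = w then (1:ℕ) else 0) = 1 := by
    intro j
    have : ∀ u : Fin n, (π j u = w) ↔ (u = (π j).symm w) := by
      intro u; constructor
      · intro h; simp [← h]
      · intro h; simp [h]
    simp only [this]
    simp
  simp [this]

lemma cnt_two_w {n p : ℕ} (π : Fin p → Equiv.Perm (Fin n)) {w w' : Fin n} (v : Fin n)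
    (h : w ≠ w') : cnt π w v + cnt π w' v ≤ p := by
  classical
  unfold cnt
  rw [← Finset.card_union_of_disjoint]
  · calc _ ≤ (univ : Finset (Fin p)).card := Finset.card_le_card (by simp)
    _ = p := by simp
  · rw [Finset.disjoint_filter]
    intro j _ hj hj'
    exact h (hj ▸ hj')

lemma cnt_two_v {n p : ℕ} (π : Fin p → Equiv.Perm (Fin n)) {v v' : Fin n} (w : Fin n)
    (h : v ≠ v') : cnt π w v + cnt π w v' ≤ p := by
  classical
  unfold cnt
  rw [← Finset.card_union_of_disjoint]
  · calc _ ≤ (univ : Finset (Fin p)).card := Finset.card_le_card (by simp)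
    _ = p := by simp
  · rw [Finset.disjoint_filter]
    intro j _ hj hj'
    exact h ((π j).injective (hj.trans hj'.symm))

lemma extend_inj {α : Type*} [Fintype α] [DecidableEq α] (s : Finset α) (f : α → α)
    (hf : Set.InjOn f s) :
    ∃ g : α → α, Function.Injective g ∧ ∀ v ∈ s, g v = f v := by
  classical
  set t := s.image f with ht
  have hcard : s.card = t.card := (Finset.card_image_of_injOn hf).symm
  have hcompl : sᶜ.card = tᶜ.card := by
    rw [Finset.card_compl, Finset.card_compl, hcard]
  let e := Finset.equivOfCardEq hcompl
  refine ⟨fun v => if h : v ∈ s then f v else (e ⟨v, by simp [h]⟩ : α), ?_, ?_⟩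
  · intro a b hab
    by_cases ha : a ∈ s <;> by_cases hb : b ∈ s <;> simp only [ha, hb, dif_pos, dif_neg,
      not_false_iff] at hab
    · exact hf ha hb hab
    · exfalso
      have h1 : f a ∈ t := Finset.mem_image_of_mem f ha
      have h2 : (e ⟨b, by simp [hb]⟩ : α) ∈ tᶜ := (e ⟨b, by simp [hb]⟩).2
      rw [hab] at h1
      simp only [Finset.mem_compl] at h2
      exact h2 h1
    · exfalso
      have h1 : f b ∈ t := Finset.mem_image_of_mem f hb
      have h2 : (e ⟨a, by simp [ha]⟩ : α) ∈ tᶜ := (e ⟨a, by simp [ha]⟩).2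
      rw [← hab] at h1
      simp only [Finset.mem_compl] at h2
      exact h2 h1
    · have := e.injective (Subtype.ext hab)
      exact Subtype.ext_iff.mp this
  · intro v hv; simp [hv]

lemma choose_w {n p : ℕ} (π : Fin p → Equiv.Perm (Fin n)) :
    ∃ w : Fin n → Fin n, Function.Injective w ∧
      ∀ v, p * (p - cnt π (w v) v) ≤ 4 * ∑ j : Fin p, (p - cnt π (π j v) v) := by
  classical
  set s : Finset (Fin n) := univ.filter (fun v => ∃ w, p < 2 * cnt π w v) with hs
  set f : Fin n → Fin n := fun v => if h : ∃ w, p < 2 * cnt π w v then h.choose else v with hf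
  have hmaj : ∀ v ∈ s, p < 2 * cnt π (f v) v := by
    intro v hv
    rw [hs, Finset.mem_filter] at hv
    obtain ⟨-, h⟩ := hv
    simp only [hf, dif_pos h]
    exact h.choose_spec
  have hinj : Set.InjOn f s := by
    intro v hv v' hv' hvv'
    by_contra hne
    have h1 := hmaj v hv
    have h2 := hmaj v' hv'
    rw [hvv'] at h1
    have := cnt_two_v π (f v') hne
    omega
  obtain ⟨g, hg, hgf⟩ := extend_inj s f hinj
  refine ⟨g, hg, fun v => ?_⟩
  by_cases hv : v ∈ s
  · -- majority case
    rw [hgf v hv]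
    have hm := hmaj v hv
    have hle : ∀ j, cnt π (π j v) v ≤ cnt π (f v) v := by
      intro j
      by_cases hj : π j v = f v
      · rw [hj]
      · have := cnt_two_w π v hj
        omega
    have hsum : p * (p - cnt π (f v) v) ≤ ∑ j : Fin p, (p - cnt π (π j v) v) := by
      calc p * (p - cnt π (f v) v) = ∑ _j : Fin p, (p - cnt π (f v) v) := by
            simp [Finset.sum_const, mul_comm]
        _ ≤ _ := Finset.sum_le_sum (fun j _ => by have := hle j; omega)
    omega
  · -- no majority
    have hall : ∀ x, 2 * cnt π x v ≤ p := by
      intro x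
      by_contra hx
      exact hv (by rw [hs, Finset.mem_filter]; exact ⟨Finset.mem_univ _, ⟨x, by omega⟩⟩)
    have hsum : p * p ≤ 2 * ∑ j : Fin p, (p - cnt π (π j v) v) := by
      calc p * p = ∑ _j : Fin p, p := by simp [mul_comm]
        _ ≤ ∑ j : Fin p, 2 * (p - cnt π (π j v) v) := by
            refine Finset.sum_le_sum (fun j _ => ?_)
            have h1 := hall (π j v)
            have h2 := cnt_le π (π j v) v
            omega
        _ = 2 * ∑ j : Fin p, (p - cnt π (π j v) v) := by rw [Finset.mul_sum]
    have h3 : p - cnt π (g v) v ≤ p := by omega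
    have h4 : p * (p - cnt π (g v) v) ≤ p * p := Nat.mul_le_mul_left _ h3
    omega

lemma lower_bound {n p : ℕ} (hp : 0 < p) (π : Fin p → Equiv.Perm (Fin n)) :
    (2 / p) * ∑ x : Fin p × Fin n, ((p : ℝ) - cnt π (π x.1 x.2) x.2) ≤
      l1Norm (Amat (fun _ => 1) - Amat (fun _ => 1) * Amat π) := by
  classical
  have hp0 : (p : ℝ) ≠ 0 := Nat.cast_ne_zero.mpr hp.ne'
  have hmul : ∀ x y : Fin p × Fin n,
      (Amat (fun _ => (1 : Equiv.Perm (Fin n))) * Amat π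
        : Matrix (Fin p × Fin n) (Fin p × Fin n) ℝ) x y
      = (p:ℝ)⁻¹ * ((p:ℝ)⁻¹ * cnt π (π y.1 y.2) x.2) := by
    intro x y
    rw [Matrix.mul_apply, Fintype.sum_prod_type]
    simp only [Amat, Equiv.Perm.coe_one, id_eq]
    have : ∀ j' : Fin p, ∑ u' : Fin n,
        ((p:ℝ)⁻¹ * if x.2 = u' then 1 else 0) * ((p:ℝ)⁻¹ * if π j' u' = π y.1 y.2 then 1 else 0)
        = (p:ℝ)⁻¹ * ((p:ℝ)⁻¹ * if π j' x.2 = π y.1 y.2 then 1 else 0) := by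
      intro j'
      rw [Finset.sum_eq_single x.2]
      · simp
      · intro u' _ hne; simp [Ne.symm hne]
      · simp
    erw [Finset.sum_congr rfl (fun j' _ => this j')]
    rw [← Finset.mul_sum, ← Finset.mul_sum, Finset.sum_boole]
    unfold cnt
    norm_num
  have hone : ∀ x y : Fin p × Fin n, Amat (fun _ => (1 : Equiv.Perm (Fin n))) x y
      = (p:ℝ)⁻¹ * if x.2 = y.2 then 1 else 0 := by
    intro x y; rfl
  -- rewrite l1Norm
  have hl1 : l1Norm (Amat (fun _ => 1) - Amat (fun _ => 1) * Amat π)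
      = ∑ x : Fin p × Fin n, ∑ y : Fin p × Fin n,
        |((p:ℝ)⁻¹ * if x.2 = y.2 then 1 else 0) - (p:ℝ)⁻¹ * ((p:ℝ)⁻¹ * cnt π (π y.1 y.2) x.2)| := by
    unfold l1Norm
    refine Finset.sum_congr rfl (fun x _ => Finset.sum_congr rfl (fun y _ => ?_))
    rw [Matrix.sub_apply, hmul x y, hone x y]
  rw [hl1]
  -- define G
  set G : Fin n → Fin p × Fin n → ℝ := fun u y =>
    |((p:ℝ)⁻¹ * if u = y.2 then 1 else 0) - (p:ℝ)⁻¹ * ((p:ℝ)⁻¹ * cnt π (π y.1 y.2) u)| with hG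
  have hsum : (∑ x : Fin p × Fin n, ∑ y : Fin p × Fin n,
        |((p:ℝ)⁻¹ * if x.2 = y.2 then 1 else 0) - (p:ℝ)⁻¹ * ((p:ℝ)⁻¹ * cnt π (π y.1 y.2) x.2)|)
      = (p : ℝ) * ∑ y : Fin p × Fin n, ∑ u : Fin n, G u y := by
    rw [Fintype.sum_prod_type]
    have : ∀ i : Fin p, ∀ u : Fin n, (∑ y : Fin p × Fin n,
        |((p:ℝ)⁻¹ * if ((i,u) : Fin p × Fin n).2 = y.2 then 1 else 0) -
          (p:ℝ)⁻¹ * ((p:ℝ)⁻¹ * cnt π (π y.1 y.2) ((i,u) : Fin p × Fin n).2)|)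
        = ∑ y : Fin p × Fin n, G u y := by
      intro i u; rfl
    rw [Finset.sum_congr rfl (fun i _ => Finset.sum_congr rfl (fun u _ => this i u))]
    rw [Finset.sum_const, Finset.card_univ, Fintype.card_fin, nsmul_eq_mul]
    rw [Finset.sum_comm]
  rw [hsum]
  rw [Finset.mul_sum, Finset.mul_sum]
  refine Finset.sum_le_sum (fun y _ => ?_)
  set c : ℝ := (cnt π (π y.1 y.2) y.2 : ℝ) with hc
  have h1 : (p:ℝ)⁻¹ - (p:ℝ)⁻¹ * ((p:ℝ)⁻¹ * c) ≤ G y.2 y := by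
    have hGe : G y.2 y = |(p:ℝ)⁻¹ - (p:ℝ)⁻¹ * ((p:ℝ)⁻¹ * c)| := by
      rw [hG]; simp [hc]
    rw [hGe]; exact le_abs_self _
  have h2 : ∀ u ∈ univ.erase y.2, G u y
      = (p:ℝ)⁻¹ * ((p:ℝ)⁻¹ * (cnt π (π y.1 y.2) u : ℝ)) := by
    intro u hu
    have hne : u ≠ y.2 := Finset.ne_of_mem_erase hu
    rw [hG]
    simp only [if_neg hne, mul_zero, zero_sub, abs_neg]
    exact abs_of_nonneg (by positivity)
  have h3 : ∑ u ∈ univ.erase y.2, G u y = (p:ℝ)⁻¹ * ((p:ℝ)⁻¹ * ((p:ℝ) - c)) := by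
    rw [Finset.sum_congr rfl h2, ← Finset.mul_sum, ← Finset.mul_sum]
    congr 2
    rw [Finset.sum_erase_eq_sub (Finset.mem_univ y.2), ← hc]
    congr 1
    have := sum_cnt_row π (π y.1 y.2)
    exact_mod_cast congrArg (Nat.cast : ℕ → ℝ) this
  have h4 : G y.2 y + ∑ u ∈ univ.erase y.2, G u y = ∑ u, G u y :=
    Finset.add_sum_erase univ (fun u => G u y) (Finset.mem_univ y.2)
  calc (2 / p) * ((p : ℝ) - cnt π (π y.1 y.2) y.2)
      = (p:ℝ) * (((p:ℝ)⁻¹ - (p:ℝ)⁻¹ * ((p:ℝ)⁻¹ * c)) + (p:ℝ)⁻¹ * ((p:ℝ)⁻¹ * ((p:ℝ) - c))) := by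
        rw [← hc]; field_simp; ring
    _ ≤ (p:ℝ) * ∑ u, G u y := by
        refine mul_le_mul_of_nonneg_left ?_ (by positivity)
        rw [← h4, h3]
        exact add_le_add_left h1 _

lemma key_bound {n p : ℕ} (hp : 0 < p) (π : Fin p → Equiv.Perm (Fin n)) :
    ∃ σ : Equiv.Perm (Fin n),
      (((univ.filter fun x : Fin p × Fin n => ¬ σ (π x.1 x.2) = x.2).card : ℝ)) ≤
        2 * l1Norm (Amat (fun _ => 1) - Amat (fun _ => 1) * Amat π) := by
  classical
  obtain ⟨w, hw, hwb⟩ := choose_w π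
  have hbij := Finite.injective_iff_bijective.mp hw
  refine ⟨(Equiv.ofBijective w hbij).symm, ?_⟩
  set σ := (Equiv.ofBijective w hbij).symm with hσ
  have hiff : ∀ (j : Fin p) (v : Fin n), (σ (π j v) = v) ↔ (π j v = w v) := by
    intro j v
    rw [hσ, Equiv.symm_apply_eq]
    rfl
  have hD : (univ.filter fun x : Fin p × Fin n => ¬ σ (π x.1 x.2) = x.2).card
      = ∑ v : Fin n, (p - cnt π (w v) v) := by
    rw [Finset.card_filter, Fintype.sum_prod_type, Finset.sum_comm]
    refine Finset.sum_congr rfl fun v _ => ?_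
    have h1 : (∑ j : Fin p, if ¬ σ (π j v) = v then (1:ℕ) else 0)
        = (univ.filter fun j : Fin p => ¬ (π j v = w v)).card := by
      rw [Finset.card_filter]
      refine Finset.sum_congr rfl fun j _ => ?_
      exact if_congr (not_congr (hiff j v)) rfl rfl
    rw [h1]
    have h2 := Finset.card_filter_add_card_filter_not
      (s := (univ : Finset (Fin p))) (fun j => π j v = w v)
    have h3 : (univ : Finset (Fin p)).card = p := by simp
    unfold cnt
    omega
  have hN : p * ∑ v : Fin n, (p - cnt π (w v) v)
      ≤ 4 * ∑ x : Fin p × Fin n, (p - cnt π (π x.1 x.2) x.2) := by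
    have hx : ∑ x : Fin p × Fin n, (p - cnt π (π x.1 x.2) x.2)
        = ∑ v : Fin n, ∑ j : Fin p, (p - cnt π (π j v) v) := by
      rw [Fintype.sum_prod_type, Finset.sum_comm]
    rw [hx, Finset.mul_sum, Finset.mul_sum]
    exact Finset.sum_le_sum fun v _ => hwb v
  set Knat := ∑ x : Fin p × Fin n, (p - cnt π (π x.1 x.2) x.2) with hK
  have hKcast : ((Knat : ℕ) : ℝ) = ∑ x : Fin p × Fin n, ((p:ℝ) - cnt π (π x.1 x.2) x.2) := by
    rw [hK, Nat.cast_sum]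
    exact Finset.sum_congr rfl fun x _ => Nat.cast_sub (cnt_le π _ _)
  have hlb := lower_bound hp π
  rw [← hKcast] at hlb
  have hppos : (0:ℝ) < p := Nat.cast_pos.mpr hp
  rw [hD]
  have hcast : (p:ℝ) * ((∑ v : Fin n, (p - cnt π (w v) v) : ℕ) : ℝ) ≤ 4 * (Knat : ℝ) := by
    exact_mod_cast hN
  have h5 : 2 * ((Knat:ℕ) : ℝ) ≤ (p:ℝ) * l1Norm (Amat (fun _ => 1) - Amat (fun _ => 1) * Amat π) := by
    have := mul_le_mul_of_nonneg_left hlb hppos.le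
    calc 2 * ((Knat:ℕ) : ℝ) = (p:ℝ) * (2 / p * (Knat:ℕ)) := by field_simp
      _ ≤ _ := this
  have h6 : (p:ℝ) * ((∑ v : Fin n, (p - cnt π (w v) v) : ℕ) : ℝ)
      ≤ (p:ℝ) * (2 * l1Norm (Amat (fun _ => 1) - Amat (fun _ => 1) * Amat π)) := by
    linarith
  exact le_of_mul_le_mul_left h6 hppos

theorem card_At_le
    (n p t : ℕ) (hn : 2 ≤ n) (hp : 1 ≤ p) (ht : 1 ≤ t) (ht2 : t ≤ 2 * n * p) :
    Set.ncard {A : Matrix (Fin p × Fin n) (Fin p × Fin n) ℝ |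
        ∃ π : Fin p → Equiv.Perm (Fin n), A = Amat π ∧
          ((t : ℝ) - 1) / 2 ≤ l1Norm (Amat (fun _ => 1) - Amat (fun _ => 1) * Amat π) ∧
          l1Norm (Amat (fun _ => 1) - Amat (fun _ => 1) * Amat π) ≤ (t : ℝ) / 2} ≤
      (n * p).choose (min t (n * p)) * n ^ (min t (n * p)) := by
  classical
  set m := min t (n * p) with hm
  let T := ({S : Finset (Fin p × Fin n) // S ∈ Finset.powersetCard m univ} × (Fin m → Fin n))
  let gfun : {S : Finset (Fin p × Fin n) // S ∈ Finset.powersetCard m univ} →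
      (Fin m → Fin n) → (Fin p × Fin n) → Fin n :=
    fun S f x => if h : x ∈ S.1 then
      f ((S.1.equivFinOfCardEq (Finset.mem_powersetCard.mp S.2).2) ⟨x, h⟩) else x.2
  let Φ : T → Matrix (Fin p × Fin n) (Fin p × Fin n) ℝ :=
    fun Sf => fun x y => (p:ℝ)⁻¹ * (if gfun Sf.1 Sf.2 x = gfun Sf.1 Sf.2 y then 1 else 0)
  have hsub : {A : Matrix (Fin p × Fin n) (Fin p × Fin n) ℝ |
        ∃ π : Fin p → Equiv.Perm (Fin n), A = Amat π ∧
          ((t : ℝ) - 1) / 2 ≤ l1Norm (Amat (fun _ => 1) - Amat (fun _ => 1) * Amat π) ∧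
          l1Norm (Amat (fun _ => 1) - Amat (fun _ => 1) * Amat π) ≤ (t : ℝ) / 2}
      ⊆ Set.range Φ := by
    rintro A ⟨π, hAeq, h1, h2⟩
    obtain ⟨σ, hσ⟩ := key_bound (by omega : 0 < p) π
    set D := univ.filter fun x : Fin p × Fin n => ¬ σ (π x.1 x.2) = x.2 with hDdef
    have hDt : D.card ≤ t := by
      have h3 : (D.card : ℝ) ≤ (t : ℝ) := by
        calc (D.card : ℝ) ≤ 2 * l1Norm (Amat (fun _ => 1) - Amat (fun _ => 1) * Amat π) := hσ
          _ ≤ 2 * ((t:ℝ)/2) := by linarith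
          _ = (t : ℝ) := by ring
      exact_mod_cast h3
    have huniv : (univ : Finset (Fin p × Fin n)).card = p * n := by
      simp [Fintype.card_prod]
    have hDnp : D.card ≤ n * p := by
      have h4 := Finset.card_filter_le (univ : Finset (Fin p × Fin n))
        (fun x => ¬ σ (π x.1 x.2) = x.2)
      rw [huniv, Nat.mul_comm p n] at h4
      exact h4
    have hDm : D.card ≤ m := le_min hDt hDnp
    have hmcard : m ≤ Fintype.card (Fin p × Fin n) := by
      simp only [Fintype.card_prod, Fintype.card_fin]
      rw [Nat.mul_comm p n]
      exact min_le_right _ _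
    obtain ⟨S, hDS, hScard⟩ := Finset.exists_superset_card_eq hDm hmcard
    have hSmem : S ∈ Finset.powersetCard m univ :=
      Finset.mem_powersetCard.mpr ⟨Finset.subset_univ _, hScard⟩
    let e := S.equivFinOfCardEq hScard
    refine ⟨(⟨S, hSmem⟩, fun i => σ (π (e.symm i).1.1 (e.symm i).1.2)), ?_⟩
    have hg : ∀ x, gfun ⟨S, hSmem⟩ (fun i => σ (π (e.symm i).1.1 (e.symm i).1.2)) x
        = σ (π x.1 x.2) := by
      intro x
      by_cases h : x ∈ S
      · simp only [gfun, dif_pos h]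
        have he : S.equivFinOfCardEq (Finset.mem_powersetCard.mp hSmem).2 = e := rfl
        rw [he, Equiv.symm_apply_apply]
      · have hxD : x ∉ D := fun hx => h (hDS hx)
        rw [hDdef] at hxD
        simp only [Finset.mem_filter, Finset.mem_univ, true_and, not_not] at hxD
        simp only [gfun, dif_neg h]
        exact hxD.symm
    funext x y
    simp only [Φ, hg]
    rw [hAeq]
    unfold Amat
    congr 1
    exact if_congr σ.apply_eq_iff_eq rfl rfl
  calc Set.ncard {A : Matrix (Fin p × Fin n) (Fin p × Fin n) ℝ |
        ∃ π : Fin p → Equiv.Perm (Fin n), A = Amat π ∧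
          ((t : ℝ) - 1) / 2 ≤ l1Norm (Amat (fun _ => 1) - Amat (fun _ => 1) * Amat π) ∧
          l1Norm (Amat (fun _ => 1) - Amat (fun _ => 1) * Amat π) ≤ (t : ℝ) / 2}
      ≤ Set.ncard (Set.range Φ) := Set.ncard_le_ncard hsub (Set.finite_range Φ)
    _ ≤ Nat.card T := by
        rw [← Nat.card_coe_set_eq]
        exact Finite.card_range_le Φ
    _ = (n * p).choose m * n ^ m := by
        rw [Nat.card_eq_fintype_card]
        simp only [T, Fintype.card_prod, Fintype.card_coe, Finset.card_powersetCard,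
          Finset.card_univ, Fintype.card_prod, Fintype.card_fin, Fintype.card_fun]
        rw [Nat.mul_comm p n]
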